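/- Type-III observability implies online observability: if a BCN has a single input word distinguishing all pairs of distinct initial states, then for every output o, the nonempty set ζ₀(o) = { s | ρ s = o } of states consistent with initial output o is online determinable. -/
import Mathlib


variable {I S O : Type} [Fintype I] [Fintype S] [Fintype O]
  [DecidableEq I] [DecidableEq S] [DecidableEq O]

/-- Output sequence generated from state `s` by input word `w`. -/
def Hout (sig : I → S → S) (rho : S → O) : S → List I → List O
  | s, [] => [rho s]
  | s, i :: w => rho s :: Hout sig rho (sig i s) w

/-- Derivation function: successors of `T` under input `i` producing output `o`. -/
def zeta (sig : I → S → S) (rho : S → O) (T : Finset S) (i : I) (o : O) : Finset S :=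
  (T.image (sig i)).filter (fun s' => rho s' = o)

/-- Online determinability of a finite set of states. -/
inductive Det (sig : I → S → S) (rho : S → O) : Finset S → Prop
  | single (T : Finset S) (h : T.card = 1) : Det sig rho T
  | step (T : Finset S) (i : I) (hinj : (T.image (sig i)).card = T.card)
      (h : ∀ o : O, (zeta sig rho T i o).Nonempty → Det sig rho (zeta sig rho T i o)) :
      Det sig rho T

/-- Safe inputs for a set of states. -/
def psi (sig : I → S → S) (rho : S → O) (T : Finset S) : Set I :=
  {i | (T.image (sig i)).card = T.card ∧
    ∀ o : O, (zeta sig rho T i o).Nonempty → Det sig rho (zeta sig rho T i o)}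

lemma det_aux (sig : I → S → S) (rho : S → O) :
    ∀ w : List I, ∀ T : Finset S, T.Nonempty →
    (∀ s ∈ T, ∀ s' ∈ T, rho s = rho s') →
    (∀ s ∈ T, ∀ s' ∈ T, s ≠ s' → Hout sig rho s w ≠ Hout sig rho s' w) →
    Det sig rho T
  | [], T, hne, hrho, hdis => by
    apply Det.single
    refine le_antisymm ?_ (Finset.one_le_card.mpr hne)
    refine Finset.card_le_one.mpr (fun s hs s' hs' => ?_)
    by_contra hneq
    exact hdis s hs s' hs' hneq (by simp [Hout, hrho s hs s' hs'])
  | i :: w, T, hne, hrho, hdis => by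
    have hinj : Set.InjOn (sig i) T := by
      intro s hs s' hs' heq
      by_contra hneq
      apply hdis s hs s' hs' hneq
      simp [Hout, hrho s hs s' hs', heq]
    apply Det.step T i (Finset.card_image_of_injOn hinj)
    intro o hzne
    apply det_aux sig rho w _ hzne
    · intro t ht t' ht'
      simp only [zeta, Finset.mem_filter] at ht ht'
      rw [ht.2, ht'.2]
    · intro t ht t' ht' htne
      simp only [zeta, Finset.mem_filter, Finset.mem_image] at ht ht'
      obtain ⟨⟨s, hs, rfl⟩, _⟩ := ht
      obtain ⟨⟨s', hs', rfl⟩, _⟩ := ht'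
      have hsne : s ≠ s' := fun h => htne (by rw [h])
      have := hdis s hs s' hs' hsne
      simp only [Hout, hrho s hs s' hs'] at this
      intro h
      exact this (by rw [h])

theorem typeIII_implies_online (sig : I → S → S) (rho : S → O)
    (h3 : ∃ w : List I, ∀ s s' : S, s ≠ s' → Hout sig rho s w ≠ Hout sig rho s' w) :
    ∀ o : O, (Finset.univ.filter (fun s : S => rho s = o)).Nonempty →
      Det sig rho (Finset.univ.filter (fun s : S => rho s = o)) := by
  obtain ⟨w, hw⟩ := h3
  intro o hne
  apply det_aux sig rho w _ hne
  · intro s hs s' hs'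
    simp only [Finset.mem_filter] at hs hs'
    rw [hs.2, hs'.2]
  · intro s _ s' _ hneq
    exact hw s s' hneq
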